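/- Let p be a prime, n coprime to p, S the uniquely cyclic subspace {(ag, af) : a ∈ R} of F_p^n × F_p^n with R = F_p[X]/(X^n-1). A pair (u, v) of F_p^n × F_p^n lies in the symplectic centraliser of S (i.e., has symplectic product zero with every element of S) if and only if g(X)v(X^{-1}) = u(X^{-1})f(X) modulo X^n - 1. -/

import Mathlib

open Polynomial

/-- The polynomial associated to a vector in `F_p^n`. -/
noncomputable def vecToPoly {p n : ℕ} (a : Fin n → ZMod p) : Polynomial (ZMod p) :=
  ∑ i : Fin n, Polynomial.C (a i) * Polynomial.X ^ (i : ℕ)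

/-- The coefficient vector of a polynomial, truncated to length `n`. -/
def polyToVec {p : ℕ} (n : ℕ) (q : Polynomial (ZMod p)) : Fin n → ZMod p :=
  fun i => q.coeff (i : ℕ)

/-- The symplectic form `⟨(a,b),(c,d)⟩ = aᵀd - bᵀc` on `F_p^n × F_p^n`. -/
def sympForm {p n : ℕ} (u v : (Fin n → ZMod p) × (Fin n → ZMod p)) : ZMod p :=
  (∑ i : Fin n, u.1 i * v.2 i) - (∑ i : Fin n, u.2 i * v.1 i)

section Aux

variable {p : ℕ}

lemma aux_monic (n : ℕ) (hn : 0 < n) : (X ^ n - 1 : Polynomial (ZMod p)).Monic := by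
  simpa using monic_X_pow_sub_C (1 : ZMod p) hn.ne'

lemma aux_degree [Nontrivial (ZMod p)] (n : ℕ) (hn : 0 < n) :
    degree ((X : Polynomial (ZMod p)) ^ n - 1) = n := by
  simpa using degree_X_pow_sub_C hn (1 : ZMod p)

lemma aux_sum_mod {ι : Type*} (s : Finset ι) (f : ι → Polynomial (ZMod p))
    (m : Polynomial (ZMod p)) : (∑ x ∈ s, f x) %ₘ m = ∑ x ∈ s, f x %ₘ m := by
  classical
  induction s using Finset.induction_on with
  | empty => simp
  | insert _ _ h ih => rw [Finset.sum_insert h, Finset.sum_insert h, add_modByMonic, ih]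

lemma aux_Xpow_mod [Nontrivial (ZMod p)] (n : ℕ) (hn : 0 < n) (t : ℕ) :
    (X ^ t : Polynomial (ZMod p)) %ₘ (X ^ n - 1) = X ^ (t % n) := by
  have hm := aux_monic (p := p) n hn
  have hdvd : (X ^ n - 1 : Polynomial (ZMod p)) ∣ X ^ t - X ^ (t % n) := by
    obtain ⟨c, hc⟩ := sub_dvd_pow_sub_pow (X ^ n : Polynomial (ZMod p)) 1 (t / n)
    refine ⟨X ^ (t % n) * c, ?_⟩
    have hX : (X : Polynomial (ZMod p)) ^ t = X ^ (t % n) * (X ^ n) ^ (t / n) := by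
      rw [← pow_mul, ← pow_add, Nat.mod_add_div]
    rw [hX]
    calc X ^ (t % n) * (X ^ n) ^ (t / n) - X ^ (t % n)
        = X ^ (t % n) * ((X ^ n) ^ (t / n) - 1 ^ (t / n)) := by ring
      _ = (X ^ n - 1) * (X ^ (t % n) * c) := by rw [hc]; ring
  have h0 : ((X : Polynomial (ZMod p)) ^ t - X ^ (t % n)) %ₘ (X ^ n - 1) = 0 :=
    (modByMonic_eq_zero_iff_dvd hm).2 hdvd
  rw [sub_modByMonic] at h0
  have hself : (X ^ (t % n) : Polynomial (ZMod p)) %ₘ (X ^ n - 1) = X ^ (t % n) := by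
    rw [modByMonic_eq_self_iff hm, aux_degree n hn, degree_X_pow]
    exact_mod_cast Nat.mod_lt t hn
  rw [hself] at h0
  exact sub_eq_zero.mp h0

lemma aux_mul_mod (n : ℕ) (hn : 0 < n) (a h : Polynomial (ZMod p)) :
    (a * h) %ₘ (X ^ n - 1) = (a * (h %ₘ (X ^ n - 1))) %ₘ (X ^ n - 1) := by
  have hm := aux_monic (p := p) n hn
  conv_lhs => rw [← modByMonic_add_div h (X ^ n - 1)]
  rw [mul_add, add_modByMonic]
  have h0 : (a * ((X ^ n - 1) * (h /ₘ (X ^ n - 1)))) %ₘ (X ^ n - 1) = 0 :=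
    (modByMonic_eq_zero_iff_dvd hm).2 ⟨a * (h /ₘ (X ^ n - 1)), by ring⟩
  rw [h0, add_zero]

lemma aux_dvd_iff {n : ℕ} (hn : 0 < n) {i k : ℕ} (hi : i < n) (hk : k < n) :
    (i * (n - 1) + k) % n = 0 ↔ i = k := by
  haveI : NeZero n := ⟨hn.ne'⟩
  rw [← Nat.dvd_iff_mod_eq_zero, ← ZMod.natCast_eq_zero_iff]
  push_cast
  have h1 : ((n - 1 : ℕ) : ZMod n) = -1 := by
    rw [Nat.cast_sub hn, Nat.cast_one, ZMod.natCast_self, zero_sub]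
  rw [h1]
  constructor
  · intro h
    have hik : ((i : ℕ) : ZMod n) = ((k : ℕ) : ZMod n) := by linear_combination -h
    have := congrArg ZMod.val hik
    rwa [ZMod.val_cast_of_lt hi, ZMod.val_cast_of_lt hk] at this
  · rintro rfl; ring

lemma aux_extract [Nontrivial (ZMod p)] {n : ℕ} (hn : 0 < n) {i : ℕ} (hi : i < n)
    (r : Polynomial (ZMod p)) (hr : r.degree < (n : WithBot ℕ)) :
    ((X ^ (i * (n - 1)) * r) %ₘ (X ^ n - 1)).coeff 0 = r.coeff i := by
  have hdeg : r.natDegree < n := by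
    rcases eq_or_ne r 0 with rfl | h
    · simpa using hn
    · exact (natDegree_lt_iff_degree_lt h).2 (by exact_mod_cast hr)
  conv_lhs => rw [r.as_sum_range' n hdeg]
  rw [Finset.mul_sum, aux_sum_mod, finset_sum_coeff]
  have hterm : ∀ k ∈ Finset.range n,
      ((X ^ (i * (n - 1)) * monomial k (r.coeff k)) %ₘ (X ^ n - 1)).coeff 0
        = if k = i then r.coeff k else 0 := by
    intro k hk
    rw [Finset.mem_range] at hk
    have hmono : (X ^ (i * (n - 1)) : Polynomial (ZMod p)) * monomial k (r.coeff k)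
        = r.coeff k • (X ^ (i * (n - 1) + k)) := by
      rw [smul_eq_C_mul, ← C_mul_X_pow_eq_monomial, pow_add]; ring
    rw [hmono, smul_modByMonic, aux_Xpow_mod n hn, coeff_smul, coeff_X_pow, smul_eq_mul]
    by_cases hik : k = i
    · subst hik
      rw [if_pos rfl, if_pos ((aux_dvd_iff hn hk hk).2 rfl).symm, mul_one]
    · rw [if_neg hik, if_neg, mul_zero]
      exact fun h => hik (((aux_dvd_iff hn hi hk).1 h.symm).symm)
  rw [Finset.sum_congr rfl hterm, Finset.sum_ite_eq' (Finset.range n) i]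
  simp [Finset.mem_range.mpr hi]

lemma aux_pairing [Nontrivial (ZMod p)] {n : ℕ} (hn : 0 < n) (w : Fin n → ZMod p)
    (q : Polynomial (ZMod p)) :
    ∑ i : Fin n, w i * (q %ₘ (X ^ n - 1)).coeff i
      = (((vecToPoly w).comp (X ^ (n - 1)) * q) %ₘ (X ^ n - 1)).coeff 0 := by
  have hm := aux_monic (p := p) n hn
  rw [aux_mul_mod n hn]
  set r := q %ₘ (X ^ n - 1) with hrdef
  have hr : r.degree < (n : WithBot ℕ) := by
    rw [← aux_degree (p := p) n hn]; exact degree_modByMonic_lt q hm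
  have hcomp : (vecToPoly w).comp (X ^ (n - 1))
      = ∑ i : Fin n, C (w i) * X ^ ((i : ℕ) * (n - 1)) := by
    rw [vecToPoly, sum_comp]
    refine Finset.sum_congr rfl fun i _ => ?_
    rw [mul_comp, C_comp, pow_comp, X_comp, ← pow_mul, Nat.mul_comm]
  rw [hcomp, Finset.sum_mul, aux_sum_mod, finset_sum_coeff]
  refine Finset.sum_congr rfl fun i _ => ?_
  have : C (w i) * X ^ ((i : ℕ) * (n - 1)) * r = w i • (X ^ ((i : ℕ) * (n - 1)) * r) := by
    rw [smul_eq_C_mul]; ring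
  rw [this, smul_modByMonic, coeff_smul, smul_eq_mul,
    aux_extract hn i.isLt r hr]

lemma aux_forall [Nontrivial (ZMod p)] {n : ℕ} (hn : 0 < n) (h : Polynomial (ZMod p)) :
    (∀ a : Polynomial (ZMod p), ((a * h) %ₘ (X ^ n - 1)).coeff 0 = 0)
      ↔ (X ^ n - 1 : Polynomial (ZMod p)) ∣ h := by
  have hm := aux_monic (p := p) n hn
  constructor
  · intro H
    rw [← modByMonic_eq_zero_iff_dvd hm]
    set r := h %ₘ (X ^ n - 1) with hrdef
    have hr : r.degree < (n : WithBot ℕ) := by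
      rw [← aux_degree (p := p) n hn]; exact degree_modByMonic_lt h hm
    ext j
    rw [coeff_zero]
    by_cases hj : j < n
    · have := H (X ^ (j * (n - 1)))
      rwa [aux_mul_mod n hn, ← hrdef, aux_extract hn hj r hr] at this
    · exact coeff_eq_zero_of_degree_lt
        (lt_of_lt_of_le hr (by exact_mod_cast Nat.le_of_not_lt hj))
  · rintro ⟨t, rfl⟩ a
    have h0 : (a * ((X ^ n - 1) * t)) %ₘ (X ^ n - 1) = 0 :=
      (modByMonic_eq_zero_iff_dvd hm).2 ⟨a * t, by ring⟩
    rw [h0, coeff_zero]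

end Aux

theorem stmt_8 (p n : ℕ) (hp : p.Prime) (hn : 0 < n) (hcop : Nat.Coprime n p)
    (g f : Polynomial (ZMod p))
    (S : Set ((Fin n → ZMod p) × (Fin n → ZMod p)))
    (hS : S = {w | ∃ a : Polynomial (ZMod p),
      w = (polyToVec n ((a * g) %ₘ (X ^ n - 1)), polyToVec n ((a * f) %ₘ (X ^ n - 1)))})
    (u v : Fin n → ZMod p) :
    (∀ s ∈ S, sympForm ((u, v) : (Fin n → ZMod p) × (Fin n → ZMod p)) s = 0) ↔
      ((X : Polynomial (ZMod p)) ^ n - 1) ∣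
        (g * (vecToPoly v).comp (X ^ (n - 1)) - (vecToPoly u).comp (X ^ (n - 1)) * f) := by
  haveI : Fact (1 < p) := ⟨hp.one_lt⟩
  set U := (vecToPoly u).comp (X ^ (n - 1) : Polynomial (ZMod p)) with hU
  set V := (vecToPoly v).comp (X ^ (n - 1) : Polynomial (ZMod p)) with hV
  have hsym : ∀ a : Polynomial (ZMod p),
      sympForm ((u, v) : (Fin n → ZMod p) × (Fin n → ZMod p))
        (polyToVec n ((a * g) %ₘ (X ^ n - 1)), polyToVec n ((a * f) %ₘ (X ^ n - 1)))
        = ((a * (U * f - V * g)) %ₘ (X ^ n - 1)).coeff 0 := by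
    intro a
    show (∑ i : Fin n, u i * ((a * f) %ₘ (X ^ n - 1)).coeff i)
        - (∑ i : Fin n, v i * ((a * g) %ₘ (X ^ n - 1)).coeff i) = _
    rw [aux_pairing hn u (a * f), aux_pairing hn v (a * g), ← coeff_sub, ← sub_modByMonic]
    congr 2
    rw [hU, hV]; ring
  have key : (∀ s ∈ S, sympForm ((u, v) : (Fin n → ZMod p) × (Fin n → ZMod p)) s = 0)
      ↔ ∀ a : Polynomial (ZMod p), ((a * (U * f - V * g)) %ₘ (X ^ n - 1)).coeff 0 = 0 := by
    subst hS
    constructor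
    · intro H a; rw [← hsym a]; exact H _ ⟨a, rfl⟩
    · rintro H s ⟨a, rfl⟩; rw [hsym a]; exact H a
  rw [key, aux_forall hn]
  have hneg : g * V - U * f = -(U * f - V * g) := by ring
  rw [hneg, dvd_neg]
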